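/- Let (Ω, 𝓕, ℙ) be a probability space, 𝓖 ⊆ 𝓕 a sub-σ-algebra, D ∈ 𝓕 an event, and ε > 0 with ℙ(D | 𝓖) ≥ ε almost surely. Let R : Ω → ℝ be a nonnegative bounded measurable function with E[R] = 1 and constants 0 < c₂ ≤ c₁ with c₂ ≤ E[R | 𝓖] ≤ c₁ almost surely. Let B : Ω → ℝ be a bounded 𝓖-measurable function with E[1_D · B] = 0. Then c₂ · E[1_D · B²] ≤ E[R · B²] − (E[R · B])² ≤ (c₁/ε) · E[1_D · B²]. -/

import Mathlib

open MeasureTheory Real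

private lemma integrable_bdd {Ω : Type*} {𝓕 : MeasurableSpace Ω} {μ : Measure Ω}
    [IsFiniteMeasure μ] {f : Ω → ℝ} (hf : Measurable f) {M : ℝ} (h : ∀ ω, |f ω| ≤ M) :
    Integrable f μ :=
  (integrable_const M).mono' hf.aestronglyMeasurable (ae_of_all _ fun ω => by
    simpa [Real.norm_eq_abs] using h ω)

/-- Tower identity: `∫ g·f = ∫ g·E[f|m]` for `g` m-strongly-measurable. -/
private lemma tower_mul {Ω : Type*} {m 𝓕 : MeasurableSpace Ω} (hm : m ≤ 𝓕)
    (μ : @Measure Ω 𝓕) [IsFiniteMeasure μ] {f g : Ω → ℝ}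
    (hg : StronglyMeasurable[m] g) (hfg : Integrable (fun ω => g ω * f ω) μ)
    (hf : Integrable f μ) :
    ∫ ω, g ω * f ω ∂μ = ∫ ω, g ω * (μ[f|m]) ω ∂μ := by
  have h : μ[g * f|m] =ᵐ[μ] g * μ[f|m] := condExp_mul_of_stronglyMeasurable_left hg hfg hf
  calc ∫ ω, g ω * f ω ∂μ = ∫ ω, (μ[g * f|m]) ω ∂μ := (integral_condExp hm).symm
    _ = ∫ ω, g ω * (μ[f|m]) ω ∂μ := integral_congr_ae h

/-- Two-sided bound for the tilted variance (core of the proof of Lemma 7.2 of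
"Optimal Estimation for the Functional Cox Model"):
`c₂·E[1_D·B²] ≤ E[R·B²] − (E[R·B])² ≤ (c₁/ε)·E[1_D·B²]`. -/
theorem tilted_variance_two_sided_bound
    {Ω : Type*} {m 𝓕 : MeasurableSpace Ω} (hm : m ≤ 𝓕)
    (μ : @MeasureTheory.Measure Ω 𝓕) [IsProbabilityMeasure μ]
    (D : Set Ω) (hD : MeasurableSet[𝓕] D)
    (ε : ℝ) (hε : 0 < ε)
    (hDcond : ∀ᵐ ω ∂μ, ε ≤ (μ[D.indicator (fun _ => (1 : ℝ)) | m]) ω)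
    (R : Ω → ℝ) (hRmeas : Measurable[𝓕] R) (hRnonneg : ∀ ω, 0 ≤ R ω)
    (hRbd : ∃ M, ∀ ω, |R ω| ≤ M)
    (hRmean : ∫ ω, R ω ∂μ = 1)
    (c₁ c₂ : ℝ) (hc₂ : 0 < c₂) (hc₂₁ : c₂ ≤ c₁)
    (hRcond : ∀ᵐ ω ∂μ, c₂ ≤ (μ[R | m]) ω ∧ (μ[R | m]) ω ≤ c₁)
    (B : Ω → ℝ) (hBmeas : Measurable[m] B) (hBbd : ∃ M, ∀ ω, |B ω| ≤ M)
    (hBcent : ∫ ω in D, B ω ∂μ = 0) :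
    c₂ * ∫ ω in D, (B ω) ^ 2 ∂μ
      ≤ (∫ ω, R ω * (B ω) ^ 2 ∂μ) - (∫ ω, R ω * B ω ∂μ) ^ 2 ∧
    (∫ ω, R ω * (B ω) ^ 2 ∂μ) - (∫ ω, R ω * B ω ∂μ) ^ 2
      ≤ (c₁ / ε) * ∫ ω in D, (B ω) ^ 2 ∂μ := by
  obtain ⟨MR, hMR⟩ := hRbd
  obtain ⟨MB, hMB⟩ := hBbd
  set m₁ := ∫ ω, R ω * B ω ∂μ with hm₁def
  set g : Ω → ℝ := fun ω => (B ω - m₁) ^ 2 with hgdef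
  set I : Ω → ℝ := D.indicator (fun _ => (1 : ℝ)) with hIdef
  -- measurability
  have hBmeasF : Measurable[𝓕] B := hBmeas.mono hm le_rfl
  have hgmeasm : Measurable[m] g := (hBmeas.sub measurable_const).pow_const 2
  have hgmeasF : Measurable[𝓕] g := hgmeasm.mono hm le_rfl
  have hB2measm : Measurable[m] (fun ω => (B ω) ^ 2) := hBmeas.pow_const 2
  have hB2measF : Measurable[𝓕] (fun ω => (B ω) ^ 2) := hB2measm.mono hm le_rfl
  have hImeasF : Measurable[𝓕] I := measurable_const.indicator hD
  -- pointwise bounds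
  have hgbd : ∀ ω, |g ω| ≤ (MB + |m₁|) ^ 2 := by
    intro ω
    have h1 : |B ω - m₁| ≤ MB + |m₁| := by
      rw [sub_eq_add_neg]
      exact (abs_add_le _ _).trans (by simp [add_le_add_right (hMB ω), hMB ω])
    calc |g ω| = |B ω - m₁| ^ 2 := by rw [hgdef]; exact abs_pow _ 2
      _ ≤ (MB + |m₁|) ^ 2 := by
          exact pow_le_pow_left₀ (abs_nonneg _) h1 2
  have hB2bd : ∀ ω, |(B ω) ^ 2| ≤ MB ^ 2 := fun ω => by
    calc |(B ω) ^ 2| = |B ω| ^ 2 := abs_pow _ 2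
      _ ≤ MB ^ 2 := pow_le_pow_left₀ (abs_nonneg _) (hMB ω) 2
  have hIbd : ∀ ω, |I ω| ≤ 1 := fun ω => by
    by_cases h : ω ∈ D <;> simp [hIdef, Set.indicator_apply, h]
  have hMR0 : ∀ ω, (0:ℝ) ≤ MR := fun ω => le_trans (abs_nonneg _) (hMR ω)
  -- integrability
  have hRint : Integrable R μ := integrable_bdd hRmeas hMR
  have hgint : Integrable g μ := integrable_bdd hgmeasF hgbd
  have hB2int : Integrable (fun ω => (B ω) ^ 2) μ := integrable_bdd hB2measF hB2bd
  have hBint : Integrable B μ := integrable_bdd hBmeasF hMB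
  have hmulbd : ∀ (f₁ f₂ : Ω → ℝ) (M₁ M₂ : ℝ), (∀ ω, |f₁ ω| ≤ M₁) → (∀ ω, |f₂ ω| ≤ M₂) →
      ∀ ω, |f₁ ω * f₂ ω| ≤ M₁ * M₂ := by
    intro f₁ f₂ M₁ M₂ h₁ h₂ ω
    rw [abs_mul]
    exact mul_le_mul (h₁ ω) (h₂ ω) (abs_nonneg _) (le_trans (abs_nonneg _) (h₁ ω))
  have hRBint : Integrable (fun ω => R ω * B ω) μ :=
    integrable_bdd (hRmeas.mul hBmeasF) (hmulbd R B MR MB hMR hMB)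
  have hRB2int : Integrable (fun ω => R ω * (B ω) ^ 2) μ :=
    integrable_bdd (hRmeas.mul hB2measF) (hmulbd R _ MR (MB ^ 2) hMR hB2bd)
  have hgRint : Integrable (fun ω => g ω * R ω) μ :=
    integrable_bdd (hgmeasF.mul hRmeas) (hmulbd g R _ MR hgbd hMR)
  have hB2Iint : Integrable (fun ω => (B ω) ^ 2 * I ω) μ :=
    integrable_bdd (hB2measF.mul hImeasF) (hmulbd _ I (MB ^ 2) 1 hB2bd hIbd)
  have hIint : Integrable I μ := integrable_bdd hImeasF hIbd
  have hgCEint : Integrable (fun ω => g ω * (μ[R|m]) ω) μ :=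
    Integrable.bdd_mul integrable_condExp hgmeasF.aestronglyMeasurable
      (c := (MB + |m₁|) ^ 2) (ae_of_all _ fun ω => by simpa [Real.norm_eq_abs] using hgbd ω)
  have hB2CEint : Integrable (fun ω => (B ω) ^ 2 * (μ[R|m]) ω) μ :=
    Integrable.bdd_mul integrable_condExp hB2measF.aestronglyMeasurable
      (c := MB ^ 2) (ae_of_all _ fun ω => by simpa [Real.norm_eq_abs] using hB2bd ω)
  have hB2CEIint : Integrable (fun ω => (B ω) ^ 2 * (μ[I|m]) ω) μ :=
    Integrable.bdd_mul integrable_condExp hB2measF.aestronglyMeasurable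
      (c := MB ^ 2) (ae_of_all _ fun ω => by simpa [Real.norm_eq_abs] using hB2bd ω)
  -- variance identity
  have hVar : ∫ ω, R ω * g ω ∂μ = (∫ ω, R ω * (B ω) ^ 2 ∂μ) - m₁ ^ 2 := by
    have heq : (fun ω => R ω * g ω)
        = fun ω => (R ω * (B ω) ^ 2 - (2 * m₁) * (R ω * B ω)) + m₁ ^ 2 * R ω := by
      funext ω; simp only [hgdef]; ring
    have i1 : Integrable (fun ω => R ω * (B ω) ^ 2 - (2 * m₁) * (R ω * B ω)) μ :=
      hRB2int.sub (hRBint.const_mul _)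
    have i2 : Integrable (fun ω => m₁ ^ 2 * R ω) μ := hRint.const_mul _
    rw [heq, integral_add i1 i2, integral_sub hRB2int (hRBint.const_mul _),
      integral_const_mul, integral_const_mul, hRmean, ← hm₁def]
    ring
  -- set integral of g over D
  have hDg_ge : ∫ ω in D, (B ω) ^ 2 ∂μ ≤ ∫ ω in D, g ω ∂μ := by
    have heq : (fun ω => g ω)
        = fun ω => ((B ω) ^ 2 - (2 * m₁) * B ω) + m₁ ^ 2 := by
      funext ω; simp only [hgdef]; ring
    have i1 : IntegrableOn (fun ω => (B ω) ^ 2 - (2 * m₁) * B ω) D μ :=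
      (hB2int.integrableOn).sub ((hBint.integrableOn).const_mul _)
    rw [heq, integral_add i1 (integrable_const _),
       integral_sub hB2int.integrableOn (hBint.integrableOn.const_mul _),
       integral_const_mul, hBcent, setIntegral_const]
    have h1 : (0:ℝ) ≤ μ.real D • m₁ ^ 2 := by
      simp only [smul_eq_mul]
      positivity
    linarith
  -- lower bound
  have hlow : c₂ * ∫ ω in D, (B ω) ^ 2 ∂μ
      ≤ (∫ ω, R ω * (B ω) ^ 2 ∂μ) - m₁ ^ 2 := by
    have t1 : ∫ ω, g ω * R ω ∂μ = ∫ ω, g ω * (μ[R|m]) ω ∂μ :=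
      tower_mul hm μ hgmeasm.stronglyMeasurable hgRint hRint
    have t2 : c₂ * ∫ ω, g ω ∂μ ≤ ∫ ω, g ω * (μ[R|m]) ω ∂μ := by
      rw [← integral_const_mul]
      refine integral_mono_ae (hgint.const_mul _) hgCEint ?_
      filter_upwards [hRcond] with ω hω
      have hg0 : 0 ≤ g ω := sq_nonneg _
      calc c₂ * g ω = g ω * c₂ := by ring
        _ ≤ g ω * (μ[R|m]) ω := mul_le_mul_of_nonneg_left hω.1 hg0
    have t3 : ∫ ω in D, g ω ∂μ ≤ ∫ ω, g ω ∂μ :=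
      setIntegral_le_integral hgint (ae_of_all _ fun ω => sq_nonneg _)
    have t4 : ∫ ω, g ω * R ω ∂μ = ∫ ω, R ω * g ω ∂μ := by
      simp_rw [mul_comm]
    calc c₂ * ∫ ω in D, (B ω) ^ 2 ∂μ
        ≤ c₂ * ∫ ω in D, g ω ∂μ := mul_le_mul_of_nonneg_left hDg_ge hc₂.le
      _ ≤ c₂ * ∫ ω, g ω ∂μ := mul_le_mul_of_nonneg_left t3 hc₂.le
      _ ≤ ∫ ω, g ω * (μ[R|m]) ω ∂μ := t2
      _ = ∫ ω, R ω * g ω ∂μ := by rw [← t1, t4]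
      _ = (∫ ω, R ω * (B ω) ^ 2 ∂μ) - m₁ ^ 2 := hVar
  -- upper bound pieces
  have hεB : ε * ∫ ω, (B ω) ^ 2 ∂μ ≤ ∫ ω in D, (B ω) ^ 2 ∂μ := by
    have t1 : ∫ ω, (B ω) ^ 2 * I ω ∂μ = ∫ ω, (B ω) ^ 2 * (μ[I|m]) ω ∂μ :=
      tower_mul hm μ hB2measm.stronglyMeasurable hB2Iint hIint
    have t2 : ∫ ω in D, (B ω) ^ 2 ∂μ = ∫ ω, (B ω) ^ 2 * I ω ∂μ := by
      rw [← integral_indicator hD]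
      congr 1
      funext ω
      by_cases h : ω ∈ D <;> simp [hIdef, Set.indicator_apply, h]
    have t3 : ∫ ω, ε * (B ω) ^ 2 ∂μ ≤ ∫ ω, (B ω) ^ 2 * (μ[I|m]) ω ∂μ := by
      refine integral_mono_ae (hB2int.const_mul _) hB2CEIint ?_
      filter_upwards [hDcond] with ω hω
      have hb0 : 0 ≤ (B ω) ^ 2 := sq_nonneg _
      calc ε * (B ω) ^ 2 = (B ω) ^ 2 * ε := by ring
        _ ≤ (B ω) ^ 2 * (μ[I|m]) ω := mul_le_mul_of_nonneg_left hω hb0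
    calc ε * ∫ ω, (B ω) ^ 2 ∂μ = ∫ ω, ε * (B ω) ^ 2 ∂μ := (integral_const_mul _ _).symm
      _ ≤ ∫ ω, (B ω) ^ 2 * (μ[I|m]) ω ∂μ := t3
      _ = ∫ ω, (B ω) ^ 2 * I ω ∂μ := t1.symm
      _ = ∫ ω in D, (B ω) ^ 2 ∂μ := t2.symm
  have hupR : ∫ ω, R ω * (B ω) ^ 2 ∂μ ≤ c₁ * ∫ ω, (B ω) ^ 2 ∂μ := by
    have t1 : ∫ ω, (B ω) ^ 2 * R ω ∂μ = ∫ ω, (B ω) ^ 2 * (μ[R|m]) ω ∂μ :=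
      tower_mul hm μ hB2measm.stronglyMeasurable
        (integrable_bdd (hB2measF.mul hRmeas) (hmulbd _ R (MB ^ 2) MR hB2bd hMR)) hRint
    have t2 : ∫ ω, (B ω) ^ 2 * (μ[R|m]) ω ∂μ ≤ ∫ ω, c₁ * (B ω) ^ 2 ∂μ := by
      refine integral_mono_ae hB2CEint (hB2int.const_mul _) ?_
      filter_upwards [hRcond] with ω hω
      have hb0 : 0 ≤ (B ω) ^ 2 := sq_nonneg _
      calc (B ω) ^ 2 * (μ[R|m]) ω ≤ (B ω) ^ 2 * c₁ := mul_le_mul_of_nonneg_left hω.2 hb0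
        _ = c₁ * (B ω) ^ 2 := by ring
    have t4 : ∫ ω, R ω * (B ω) ^ 2 ∂μ = ∫ ω, (B ω) ^ 2 * R ω ∂μ := by
      simp_rw [mul_comm]
    rw [t4, t1]
    calc ∫ ω, (B ω) ^ 2 * (μ[R|m]) ω ∂μ ≤ ∫ ω, c₁ * (B ω) ^ 2 ∂μ := t2
      _ = c₁ * ∫ ω, (B ω) ^ 2 ∂μ := integral_const_mul _ _
  have hup : (∫ ω, R ω * (B ω) ^ 2 ∂μ) - m₁ ^ 2
      ≤ (c₁ / ε) * ∫ ω in D, (B ω) ^ 2 ∂μ := by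
    have hc₁ : 0 < c₁ := lt_of_lt_of_le hc₂ hc₂₁
    have h1 : (∫ ω, R ω * (B ω) ^ 2 ∂μ) - m₁ ^ 2 ≤ ∫ ω, R ω * (B ω) ^ 2 ∂μ :=
      sub_le_self _ (sq_nonneg _)
    have h2 : c₁ * ∫ ω, (B ω) ^ 2 ∂μ ≤ (c₁ / ε) * ∫ ω in D, (B ω) ^ 2 ∂μ := by
      have h3 : (c₁ / ε) * (ε * ∫ ω, (B ω) ^ 2 ∂μ)
          ≤ (c₁ / ε) * ∫ ω in D, (B ω) ^ 2 ∂μ :=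
        mul_le_mul_of_nonneg_left hεB (by positivity)
      have h4 : (c₁ / ε) * (ε * ∫ ω, (B ω) ^ 2 ∂μ) = c₁ * ∫ ω, (B ω) ^ 2 ∂μ := by
        field_simp
      linarith
    linarith [hupR]
  exact ⟨hlow, hup⟩
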